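/- Under the ordering p_1 < q_1 < p_2 < q_2 < … < p_n < q_n (pairwise disjoint intervals) and strong connectivity, for any initial condition there exists a finite time T after which ψ_n(x_n(t)) = p_n and ψ_1(x_1(t)) = q_1 for all t ≥ T. -/

import Mathlib

open Finset Filter

/-- Saturation of `z` onto the interval `[p, q]`. -/
noncomputable def sat (p q z : ℝ) : ℝ := max p (min z q)

lemma sat_sub_le (p q z : ℝ) : sat p q z - z ≤ max (p - z) 0 := by
  have h1 : max p (min z q) ≤ z + max (p - z) 0 :=
    max_le (by linarith [le_max_left (p - z) (0:ℝ)])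
      (by linarith [min_le_left z q, le_max_right (p - z) (0:ℝ)])
  simp only [sat]
  linarith

lemma le_sat_sub (p q z : ℝ) : -(max (z - q) 0) ≤ sat p q z - z := by
  have h1 : z - max (z - q) 0 ≤ min z q :=
    le_min (by linarith [le_max_right (z - q) (0:ℝ)])
      (by linarith [le_max_left (z - q) (0:ℝ)])
  have h2 : min z q ≤ max p (min z q) := le_max_right _ _
  simp only [sat]; linarith

lemma sat_le_q (p q z : ℝ) (hpq : p ≤ q) : sat p q z ≤ q :=
  max_le hpq (min_le_right _ _)

lemma p_le_sat (p q z : ℝ) : p ≤ sat p q z := le_max_left _ _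

lemma sat_eq_p (p q z : ℝ) (hz : z ≤ p) : sat p q z = p :=
  max_eq_left (le_trans (min_le_left _ _) hz)

lemma sat_eq_q (p q z : ℝ) (hpq : p ≤ q) (hz : q ≤ z) : sat p q z = q := by
  rw [sat, min_eq_right hz, max_eq_right hpq]

/-- If a differentiable function has derivative `≤ -δ < 0` whenever it is `≥ c`,
then eventually it stays `≤ c`. -/
lemma eventually_le_of_deriv (f f' : ℝ → ℝ) (hf : ∀ t, HasDerivAt f (f' t) t)
    (c δ : ℝ) (hδ : 0 < δ) (hd : ∀ t, c ≤ f t → f' t ≤ -δ) :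
    ∃ T : ℝ, ∀ t ≥ T, f t ≤ c := by
  have hcont : Continuous f :=
    continuous_iff_continuousAt.mpr fun t => (hf t).continuousAt
  have hderiv : ∀ t, deriv f t = f' t := fun t => (hf t).deriv
  -- Step A: there is some `s` with `f s ≤ c`.
  have stepA : ∃ s : ℝ, f s ≤ c := by
    by_contra hcon
    push_neg at hcon
    have hall : ∀ t, f' t ≤ -δ := fun t => hd t (hcon t).le
    have hφ : ∀ t, HasDerivAt (fun t => f t + δ * t) (f' t + δ) t := by
      intro t
      exact ((hf t).add ((hasDerivAt_id t).const_mul δ)).congr_deriv (by simp)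
    have hanti : Antitone (fun t => f t + δ * t) := by
      apply antitone_of_deriv_nonpos (fun t => (hφ t).differentiableAt)
      intro t
      rw [(hφ t).deriv]
      linarith [hall t]
    have hfc : 0 < f 0 - c := by linarith [hcon 0]
    have hq : 0 ≤ (f 0 - c) / δ := div_nonneg hfc.le hδ.le
    have hs0 : (0:ℝ) ≤ (f 0 - c) / δ + 1 := by linarith
    have hmono := hanti hs0
    simp only at hmono
    have hds : δ * ((f 0 - c) / δ + 1) = (f 0 - c) + δ := by
      field_simp
    have : f ((f 0 - c) / δ + 1) ≤ c - δ := by linarith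
    linarith [hcon ((f 0 - c) / δ + 1)]
  obtain ⟨s, hsc⟩ := stepA
  refine ⟨s, fun t ht => ?_⟩
  by_contra hct
  push_neg at hct
  have hst : s < t := by
    rcases lt_or_eq_of_le ht with h | h
    · exact h
    · exact absurd hsc (by rw [h]; linarith)
  set S : Set ℝ := Set.Icc s t ∩ f ⁻¹' (Set.Iic c) with hS
  have hSne : S.Nonempty := ⟨s, ⟨le_refl s, hst.le⟩, hsc⟩
  have hSbdd : BddAbove S := ⟨t, fun r hr => hr.1.2⟩
  have hSclosed : IsClosed S := (isClosed_Icc).inter (isClosed_Iic.preimage hcont)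
  set u := sSup S with hu
  have huS : u ∈ S := hSclosed.csSup_mem hSne hSbdd
  have hut : u < t := lt_of_le_of_ne huS.1.2 (fun h => absurd huS.2 (by rw [h]; simpa using not_le.mpr hct))
  have hgt : ∀ r ∈ Set.Ioc u t, c < f r := by
    intro r hr
    by_contra hcr
    push_neg at hcr
    have hrS : r ∈ S := ⟨⟨le_trans huS.1.1 hr.1.le, hr.2⟩, hcr⟩
    exact absurd (le_csSup hSbdd hrS) (not_le.mpr hr.1)
  have hanti : AntitoneOn f (Set.Icc u t) := by
    apply antitoneOn_of_deriv_nonpos (convex_Icc u t) hcont.continuousOn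
    · exact fun r _ => ((hf r).differentiableAt).differentiableWithinAt
    · intro r hr
      rw [interior_Icc] at hr
      rw [hderiv]
      have : c ≤ f r := (hgt r ⟨hr.1, hr.2.le⟩).le
      linarith [hd r this]
  have := hanti (Set.left_mem_Icc.mpr hut.le) (Set.right_mem_Icc.mpr hut.le) hut.le
  exact absurd huS.2 (by simp; linarith)

/-- Key comparison lemma: if `f' ≤ A (Q - f) + B max (P - f) 0` with `A > 0`, `B ≥ 0`,
`Q < P`, then eventually `f < P`. -/
lemma key_lemma (f f' : ℝ → ℝ) (hf : ∀ t, HasDerivAt f (f' t) t)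
    (A B Q P : ℝ) (hA : 0 < A) (hB : 0 ≤ B) (hQP : Q < P)
    (hbound : ∀ t, f' t ≤ A * (Q - f t) + B * max (P - f t) 0) :
    ∃ T : ℝ, ∀ t ≥ T, f t < P := by
  set c : ℝ := ((A * Q + B * P) / (A + B) + P) / 2 with hc
  have hAB : 0 < A + B := by linarith
  have havg : (A * Q + B * P) / (A + B) < P := by
    rw [div_lt_iff₀ hAB]; nlinarith
  have hcP : c < P := by rw [hc]; linarith
  have hcavg : (A * Q + B * P) / (A + B) < c := by rw [hc]; linarith
  set δ : ℝ := A * (c - Q) - B * (P - c) with hδdef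
  have hδ : 0 < δ := by
    have : A * Q + B * P < c * (A + B) := (div_lt_iff₀ hAB).mp hcavg
    rw [hδdef]; nlinarith
  have hd : ∀ t, c ≤ f t → f' t ≤ -δ := by
    intro t htc
    have h1 : A * (Q - f t) ≤ A * (Q - c) := by nlinarith
    have h2 : max (P - f t) 0 ≤ P - c := max_le (by linarith) (by linarith)
    have h3 : B * max (P - f t) 0 ≤ B * (P - c) := by nlinarith
    have := hbound t
    rw [hδdef]; linarith
  obtain ⟨T, hT⟩ := eventually_le_of_deriv f f' hf c δ hδ hd
  exact ⟨T, fun t ht => lt_of_le_of_lt (hT t ht) hcP⟩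

lemma exists_in_edge {α : Type*} {r : α → α → Prop} {i j : α}
    (h : Relation.ReflTransGen r i j) : i ≠ j → ∃ k, k ≠ j ∧ r k j := by
  induction h with
  | refl => intro h; exact absurd rfl h
  | @tail b c hab hbc ih =>
    intro hij
    by_cases hbceq : b = c
    · subst hbceq
      by_cases hib : i = b
      · exact absurd hib hij
      · exact ih hib
    · exact ⟨b, hbceq, hbc⟩

/-- With strongly connected graph and pairwise disjoint ordered intervals,
for any solution there is a finite time after which the output of node `n`
is saturated at `p_n` and the output of node `1` is saturated at `q_1`. -/
theorem extreme_nodes_eventually_saturated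
    (n : ℕ) (hn : 1 ≤ n)
    (a : Fin (n + 1) → Fin (n + 1) → ℝ) (ha : ∀ i j, 0 ≤ a i j)
    (hSC : ∀ i j : Fin (n + 1), Relation.ReflTransGen (fun u v => 0 < a v u) i j)
    (p q : Fin (n + 1) → ℝ) (hpq : ∀ m, p m ≤ q m)
    (hpmono : StrictMono p) (hqmono : StrictMono q)
    (hdisj : ∀ i j : Fin (n + 1), i < j → q i < p j)
    (x : ℝ → Fin (n + 1) → ℝ)
    (hx : ∀ i t, HasDerivAt (fun s => x s i)
      (∑ j, a i j * (sat (p j) (q j) (x t j) - x t i)) t) :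
    ∃ T : ℝ, ∀ t ≥ T,
      sat (p (Fin.last n)) (q (Fin.last n)) (x t (Fin.last n)) = p (Fin.last n) ∧
      sat (p 0) (q 0) (x t 0) = q 0 := by
  set L : Fin (n + 1) := Fin.last n with hLdef
  have h0L : (0 : Fin (n + 1)) ≠ L := by
    simp [hLdef, Fin.ext_iff]
    omega
  -- index n-1 and index 1
  set J : Fin (n + 1) := ⟨n - 1, by omega⟩ with hJdef
  set J1 : Fin (n + 1) := ⟨1, by omega⟩ with hJ1def
  have hJL : J < L := by simp [hJdef, hLdef, Fin.lt_def]; omega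
  have h0J1 : (0 : Fin (n + 1)) < J1 := by simp [hJ1def, Fin.lt_def]
  have hQP : q J < p L := hdisj J L hJL
  have hQP0 : q 0 < p J1 := hdisj 0 J1 h0J1
  -- positive incoming weights
  obtain ⟨k, hkL, hakL⟩ := exists_in_edge (hSC 0 L) h0L
  obtain ⟨k0, hk0, hak0⟩ := exists_in_edge (hSC L 0) (Ne.symm h0L)
  -- node L
  have part1 : ∃ T : ℝ, ∀ t ≥ T, x t L < p L := by
    set A : ℝ := ∑ j ∈ univ.erase L, a L j with hAdef
    have hA : 0 < A := by
      apply Finset.sum_pos' (fun j _ => ha L j)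
      exact ⟨k, Finset.mem_erase.mpr ⟨hkL, mem_univ k⟩, hakL⟩
    apply key_lemma (fun t => x t L) _ (hx L) A (a L L) (q J) (p L) hA (ha L L) hQP
    intro t
    have hsplit := Finset.sum_erase_add univ
      (fun j => a L j * (sat (p j) (q j) (x t j) - x t L)) (mem_univ L)
    have h1 : ∑ j ∈ univ.erase L, a L j * (sat (p j) (q j) (x t j) - x t L)
        ≤ A * (q J - x t L) := by
      rw [hAdef, Finset.sum_mul]
      apply Finset.sum_le_sum
      intro j hj
      apply mul_le_mul_of_nonneg_left _ (ha L j)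
      have hjL : j ≠ L := (Finset.mem_erase.mp hj).1
      have hjv : (j : ℕ) ≠ n := by simpa [hLdef, Fin.ext_iff] using hjL
      have hjJ : j ≤ J := by
        have := j.isLt
        simp only [hJdef, Fin.le_def]
        omega
      have : q j ≤ q J := hqmono.monotone hjJ
      have := sat_le_q (p j) (q j) (x t j) (hpq j)
      linarith
    have h2 : a L L * (sat (p L) (q L) (x t L) - x t L)
        ≤ a L L * max (p L - x t L) 0 :=
      mul_le_mul_of_nonneg_left (sat_sub_le _ _ _) (ha L L)
    calc ∑ j, a L j * (sat (p j) (q j) (x t j) - x t L)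
        = ∑ j ∈ univ.erase L, a L j * (sat (p j) (q j) (x t j) - x t L)
          + a L L * (sat (p L) (q L) (x t L) - x t L) := hsplit.symm
      _ ≤ A * (q J - x t L) + a L L * max (p L - x t L) 0 := by linarith
  -- node 0
  have part2 : ∃ T : ℝ, ∀ t ≥ T, q 0 < x t 0 := by
    set A : ℝ := ∑ j ∈ univ.erase (0 : Fin (n+1)), a 0 j with hAdef
    have hA : 0 < A := by
      apply Finset.sum_pos' (fun j _ => ha 0 j)
      exact ⟨k0, Finset.mem_erase.mpr ⟨hk0, mem_univ k0⟩, hak0⟩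
    have hneg : ∀ t, HasDerivAt (fun s => -(x s 0))
        (-(∑ j, a 0 j * (sat (p j) (q j) (x t j) - x t 0))) t := fun t => (hx 0 t).neg
    have hb : ∀ t, -(∑ j, a 0 j * (sat (p j) (q j) (x t j) - x t 0))
        ≤ A * (-(p J1) - -(x t 0)) + a 0 0 * max (-(q 0) - -(x t 0)) 0 := by
      intro t
      have hsplit := Finset.sum_erase_add univ
        (fun j => a 0 j * (sat (p j) (q j) (x t j) - x t 0)) (mem_univ (0 : Fin (n+1)))
      have h1 : A * (p J1 - x t 0)
          ≤ ∑ j ∈ univ.erase (0 : Fin (n+1)), a 0 j * (sat (p j) (q j) (x t j) - x t 0) := by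
        rw [hAdef, Finset.sum_mul]
        apply Finset.sum_le_sum
        intro j hj
        apply mul_le_mul_of_nonneg_left _ (ha 0 j)
        have hj0 : j ≠ 0 := (Finset.mem_erase.mp hj).1
        have hjv : (j : ℕ) ≠ 0 := by intro h; exact hj0 (Fin.ext (by simp [h]))
        have hjJ : J1 ≤ j := by
          simp only [hJ1def, Fin.le_def]
          omega
        have : p J1 ≤ p j := hpmono.monotone hjJ
        have := p_le_sat (p j) (q j) (x t j)
        linarith
      have h2 : -(a 0 0 * max (x t 0 - q 0) 0)
          ≤ a 0 0 * (sat (p 0) (q 0) (x t 0) - x t 0) := by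
        have := le_sat_sub (p 0) (q 0) (x t 0)
        nlinarith [ha 0 0]
      have heq : ∑ j, a 0 j * (sat (p j) (q j) (x t j) - x t 0)
          = ∑ j ∈ univ.erase (0 : Fin (n+1)), a 0 j * (sat (p j) (q j) (x t j) - x t 0)
            + a 0 0 * (sat (p 0) (q 0) (x t 0) - x t 0) := hsplit.symm
      have hmax : max (-(q 0) - -(x t 0)) 0 = max (x t 0 - q 0) 0 := by ring_nf
      rw [heq, hmax]
      have hr : A * (-(p J1) - -(x t 0)) = -(A * (p J1 - x t 0)) := by ring
      linarith [h1, h2, hr]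
    obtain ⟨T, hT⟩ := key_lemma (fun t => -(x t 0)) _ hneg A (a 0 0) (-(p J1)) (-(q 0))
      hA (ha 0 0) (by linarith) hb
    exact ⟨T, fun t ht => by have := hT t ht; linarith⟩
  obtain ⟨T1, hT1⟩ := part1
  obtain ⟨T2, hT2⟩ := part2
  refine ⟨max T1 T2, fun t ht => ?_⟩
  constructor
  · exact sat_eq_p _ _ _ (hT1 t (le_trans (le_max_left _ _) ht)).le
  · exact sat_eq_q _ _ _ (hpq 0) (hT2 t (le_trans (le_max_right _ _) ht)).le
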